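/- Let Ψ, Φ and h be as in the canonical construction with d = 1 + rλ + sλ′, and let Υ be a clause minimum prime pure Horn CNF representation of h. Then |Ψ|_c/(λ+λ′) ≤ |Υ|_c − t(κ(f)·r + s) ≤ |Ψ|_c, where f is any tight optimal total-cover of the refined Label Cover instance L and κ(f)·r + s is the total number of labels assigned by f. -/

import Mathlib

open Finset

/-- A clause, given by its (fin)sets of positive and negative variables. -/
structure Clause (V : Type*) where
  pos : Finset V
  neg : Finset V
deriving DecidableEq

namespace Clause

variable {V : Type*}

/-- A genuine clause: no variable occurs both positively and negatively. -/
def IsClause (C : Clause V) : Prop := Disjoint C.pos C.neg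

/-- Evaluation of a clause (as a disjunction of literals) under an assignment. -/
def eval (C : Clause V) (a : V → Bool) : Prop :=
  (∃ v ∈ C.pos, a v = true) ∨ (∃ v ∈ C.neg, a v = false)

/-- A pure (definite) Horn clause: exactly one positive literal, its head. -/
def IsPureHorn (C : Clause V) : Prop := ∃ v, C.pos = {v}

end Clause

variable {V : Type*}

/-- Conjunction (as a predicate on assignments) of a set of clauses. -/
def evalSet (S : Set (Clause V)) (a : V → Bool) : Prop := ∀ C ∈ S, C.eval a

/-- Conjunction of the clauses of a CNF, i.e. of a finite set of clauses. -/
def evalCNF (Φ : Finset (Clause V)) (a : V → Bool) : Prop := ∀ C ∈ Φ, C.eval a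

/-- A CNF represents a Boolean function `h`. -/
def Represents (Φ : Finset (Clause V)) (h : (V → Bool) → Prop) : Prop :=
  ∀ a, evalCNF Φ a ↔ h a

/-- A pure Horn CNF: all clauses are pure Horn. -/
def IsPureHornCNF (Φ : Finset (Clause V)) : Prop :=
  ∀ C ∈ Φ, C.IsClause ∧ C.IsPureHorn

/-- The forward chaining closure of a set `Q` of variables with respect to the
pure Horn CNF `Φ`: the smallest set containing `Q` such that whenever `Φ` contains
a clause `S → v` with `S` inside the set, also `v` belongs to it. -/
def fcClosure (Φ : Finset (Clause V)) (Q : Set V) : Set V :=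
  ⋂₀ {T : Set V | Q ⊆ T ∧ ∀ C ∈ Φ, ∀ v : V, C.pos = {v} → ↑C.neg ⊆ T → v ∈ T}

/-- `C` is an implicate of `h`: every assignment falsifying `C` falsifies `h`. -/
def Implicate (h : (V → Bool) → Prop) (C : Clause V) : Prop :=
  ∀ a, ¬ C.eval a → ¬ h a

/-- `C` is a prime implicate of `h`: an implicate from which no literal can be
deleted while remaining an implicate. -/
def PrimeImplicate [DecidableEq V] (h : (V → Bool) → Prop) (C : Clause V) : Prop :=
  C.IsClause ∧ Implicate h C ∧
  (∀ v ∈ C.pos, ¬ Implicate h ⟨C.pos.erase v, C.neg⟩) ∧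
  (∀ v ∈ C.neg, ¬ Implicate h ⟨C.pos, C.neg.erase v⟩)

/-- `C₁` and `C₂` are resolvable on `v`: `v` occurs positively in `C₁`, negatively in
`C₂`, and no other variable occurs with opposite signs in them. -/
def Resolvable (C₁ C₂ : Clause V) (v : V) : Prop :=
  v ∈ C₁.pos ∧ v ∈ C₂.neg ∧
  ∀ w, w ≠ v → ¬(w ∈ C₁.pos ∧ w ∈ C₂.neg) ∧ ¬(w ∈ C₁.neg ∧ w ∈ C₂.pos)

/-- The resolvent `R(C₁,C₂) = (C₁ \ {v}) ∪ (C₂ \ {v̄})`. -/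
def resolventOf [DecidableEq V] (C₁ C₂ : Clause V) (v : V) : Clause V :=
  ⟨C₁.pos.erase v ∪ C₂.pos, C₁.neg ∪ C₂.neg.erase v⟩

/-- A set of clauses closed under resolution. -/
def ResClosed [DecidableEq V] (S : Set (Clause V)) : Prop :=
  ∀ C₁ ∈ S, ∀ C₂ ∈ S, ∀ v, Resolvable C₁ C₂ v → resolventOf C₁ C₂ v ∈ S

/-- The resolution closure of a set of clauses. -/
def resClosure [DecidableEq V] (S : Set (Clause V)) : Set (Clause V) :=
  ⋂₀ {T : Set (Clause V) | S ⊆ T ∧ ResClosed T}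

/-- `I(h)`: the resolution closure of the set of prime implicates of `h`. -/
def implSet [DecidableEq V] (h : (V → Bool) → Prop) : Set (Clause V) :=
  resClosure {C | PrimeImplicate h C}

/-- An exclusive set of clauses of `h`. -/
def ExclusiveSet [DecidableEq V] (h : (V → Bool) → Prop) (Xs : Set (Clause V)) : Prop :=
  Xs ⊆ implSet h ∧
  ∀ C₁ ∈ implSet h, ∀ C₂ ∈ implSet h, ∀ v, Resolvable C₁ C₂ v →
    resolventOf C₁ C₂ v ∈ Xs → C₁ ∈ Xs ∧ C₂ ∈ Xs

/-- The set of variables occurring in a CNF. -/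
def varsOf [DecidableEq V] (Φ : Finset (Clause V)) : Finset V :=
  Φ.biUnion fun C => C.pos ∪ C.neg


/-- A Label Cover instance: a bipartite graph with parts `X` and `Y` and edge set `E`,
label sets `A` (for `X`-vertices) and `B` (for `Y`-vertices), and a nonempty
constraint relation `cst e ⊆ A × B` for every edge `e ∈ E`. -/
structure LabelCover (X Y A B : Type*) where
  E : Finset (X × Y)
  cst : X × Y → Finset (A × B)
  cst_nonempty : ∀ e ∈ E, (cst e).Nonempty

namespace LabelCover

variable {X Y A B : Type*}

/-- A labeling `(f, g)` covers an edge `(x,y)` if for every label `b ∈ g y` there is a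
label `a ∈ f x` with `(a, b)` admissible for the edge. -/
def Covers (I : LabelCover X Y A B) (f : X → Finset A) (g : Y → Finset B)
    (e : X × Y) : Prop :=
  ∀ b ∈ g e.2, ∃ a ∈ f e.1, (a, b) ∈ I.cst e

/-- A total-cover: a labeling (assigning a nonempty label set to every `Y`-vertex)
covering every edge. -/
def IsTotalCover (I : LabelCover X Y A B) (f : X → Finset A) (g : Y → Finset B) : Prop :=
  (∀ y, (g y).Nonempty) ∧ ∀ e ∈ I.E, I.Covers f g e

/-- A total-cover is tight if every `Y`-vertex receives exactly one label. -/
def Tight (g : Y → Finset B) : Prop := ∀ y, (g y).card = 1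

end LabelCover

/-- The cost of a labeling: the average number of labels assigned to `X`-vertices. -/
def lcCost {X A : Type*} [Fintype X] (f : X → Finset A) : ℚ :=
  (∑ x, ((f x).card : ℚ)) / (Fintype.card X : ℚ)


/-- The labels of the refined Label Cover instance: `L ∪ L′`, where `L = ⋃_x L_x`
with `L_x = {x} × A` and `L′ = ⋃_y L′_y` with `L′_y = {y} × B`. -/
abbrev Lab (X Y A B : Type*) := (X × A) ⊕ (Y × B)

/-- The propositional variables of the canonical pure Horn CNF construction:
`u ℓ` for labels `ℓ ∈ L ∪ L′`, `e x y i` and `el x y ℓ′ i` for edges `(x,y)`,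
labels `ℓ′ ∈ L′_y` and indices `i ∈ [d]`, and `v j` for `j ∈ [t]`. -/
inductive PV (X Y A B : Type*) where
  | u : Lab X Y A B → PV X Y A B
  | e : X → Y → ℕ → PV X Y A B
  | el : X → Y → B → ℕ → PV X Y A B
  | v : ℕ → PV X Y A B
deriving DecidableEq

section Canonical

variable {X Y A B : Type*} [Fintype X] [Fintype Y] [Fintype A] [Fintype B]
  [DecidableEq X] [DecidableEq Y] [DecidableEq A] [DecidableEq B]

/-- The (open) neighborhood `N(y) = {z ∈ X : (z,y) ∈ E}`. -/
def Nbr (I : LabelCover X Y A B) (y : Y) : Finset X :=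
  Finset.univ.filter fun z => (z, y) ∈ I.E

/-- Clauses (a): `u(ℓ) ∧ u(ℓ′) → e(x,y,ℓ′,i)` for `(x,y) ∈ E`, `(ℓ,ℓ′) ∈ Π_{(x,y)}`,
`i ∈ [d]`. -/
def clA (I : LabelCover X Y A B) (d : ℕ) : Finset (Clause (PV X Y A B)) :=
  (I.E ×ˢ Finset.Icc 1 d).biUnion fun p =>
    (I.cst p.1).image fun ab =>
      ⟨{PV.el p.1.1 p.1.2 ab.2 p.2},
       {PV.u (Sum.inl (p.1.1, ab.1)), PV.u (Sum.inr (p.1.2, ab.2))}⟩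

/-- Clauses (b): `⋀_{z ∈ N(y)} e(z,y,ℓ′,i) → e(x,y,i)` for `(x,y) ∈ E`, `ℓ′ ∈ L′_y`,
`i ∈ [d]`. -/
def clB (I : LabelCover X Y A B) (d : ℕ) : Finset (Clause (PV X Y A B)) :=
  ((I.E ×ˢ (Finset.univ : Finset B)) ×ˢ Finset.Icc 1 d).image fun p =>
    ⟨{PV.e p.1.1.1 p.1.1.2 p.2},
     (Nbr I p.1.1.2).image fun z => PV.el z p.1.1.2 p.1.2 p.2⟩

/-- Clauses (c): `e(x,y,i) → e(x,y,ℓ′,i)` for `(x,y) ∈ E`, `ℓ′ ∈ L′_y`, `i ∈ [d]`. -/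
def clC (I : LabelCover X Y A B) (d : ℕ) : Finset (Clause (PV X Y A B)) :=
  ((I.E ×ˢ (Finset.univ : Finset B)) ×ˢ Finset.Icc 1 d).image fun p =>
    ⟨{PV.el p.1.1.1 p.1.1.2 p.1.2 p.2}, {PV.e p.1.1.1 p.1.1.2 p.2}⟩

/-- The common body of the clauses (d): all variables `e(x,y,i)`, `(x,y) ∈ E`, `i ∈ [d]`. -/
def bigBody (I : LabelCover X Y A B) (d : ℕ) : Finset (PV X Y A B) :=
  (I.E ×ˢ Finset.Icc 1 d).image fun p => PV.e p.1.1 p.1.2 p.2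

/-- Clauses (d): `⋀_{i ∈ [d]} ⋀_{(x,y) ∈ E} e(x,y,i) → u(ℓ)` for `ℓ ∈ L ∪ L′`. -/
def clD (I : LabelCover X Y A B) (d : ℕ) : Finset (Clause (PV X Y A B)) :=
  (Finset.univ : Finset (Lab X Y A B)).image fun ℓ => ⟨{PV.u ℓ}, bigBody I d⟩

/-- Clauses (e): `v(j) → u(ℓ)` for `j ∈ [t]`, `ℓ ∈ L ∪ L′`. -/
def clE (X Y A B : Type*) [Fintype X] [Fintype Y] [Fintype A] [Fintype B]
    [DecidableEq X] [DecidableEq Y] [DecidableEq A] [DecidableEq B]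
    (t : ℕ) : Finset (Clause (PV X Y A B)) :=
  (Finset.Icc 1 t ×ˢ (Finset.univ : Finset (Lab X Y A B))).image fun p =>
    ⟨{PV.u p.2}, {PV.v p.1}⟩

/-- The canonical formula `Ψ`: clauses of types (a)–(d). -/
def PsiCNF (I : LabelCover X Y A B) (d : ℕ) : Finset (Clause (PV X Y A B)) :=
  clA I d ∪ clB I d ∪ clC I d ∪ clD I d

/-- The canonical formula `Φ`: clauses of types (a)–(e). -/
def PhiCNF (I : LabelCover X Y A B) (d t : ℕ) : Finset (Clause (PV X Y A B)) :=
  PsiCNF I d ∪ clE X Y A B t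

/-- The pure Horn function `h` represented by the canonical formula `Φ`. -/
def hFun (I : LabelCover X Y A B) (d t : ℕ) : (PV X Y A B → Bool) → Prop :=
  fun a => evalCNF (PhiCNF I d t) a

/-- The pure Horn function `g` represented by the canonical formula `Ψ`. -/
def gFun (I : LabelCover X Y A B) (d : ℕ) : (PV X Y A B → Bool) → Prop :=
  fun a => evalCNF (PsiCNF I d) a

end Canonical

/-! ### Auxiliary lemmas: forward chaining closure -/

section ClosureAux
variable {V : Type*} {Γ Δ Φ : Finset (Clause V)} {Q T : Set V}

lemma fcClosure_le (h1 : Q ⊆ T)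
    (h2 : ∀ C ∈ Φ, ∀ v : V, C.pos = {v} → ↑C.neg ⊆ T → v ∈ T) :
    fcClosure Φ Q ⊆ T :=
  Set.sInter_subset_of_mem ⟨h1, h2⟩

lemma le_fcClosure : Q ⊆ fcClosure Φ Q :=
  Set.subset_sInter fun _ hT => hT.1

lemma fcClosure_closed {C : Clause V} (hC : C ∈ Φ) {v : V} (hp : C.pos = {v})
    (hn : ↑C.neg ⊆ fcClosure Φ Q) : v ∈ fcClosure Φ Q :=
  Set.mem_sInter.mpr fun T hT =>
    hT.2 C hC v hp fun w hw => Set.mem_sInter.mp (hn hw) T hT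

lemma fcClosure_mono (h : Q ⊆ T) : fcClosure Φ Q ⊆ fcClosure Φ T :=
  fcClosure_le (h.trans le_fcClosure) fun C hC v hp hn => fcClosure_closed hC hp hn

lemma fcClosure_idem : fcClosure Φ (fcClosure Φ Q) ⊆ fcClosure Φ Q :=
  fcClosure_le subset_rfl fun C hC v hp hn => fcClosure_closed hC hp hn

lemma fcClosure_mono_left (h : Γ ⊆ Δ) : fcClosure Γ Q ⊆ fcClosure Δ Q :=
  fcClosure_le le_fcClosure fun C hC v hp hn => fcClosure_closed (h hC) hp hn

open Classical in
/-- Characteristic assignment of a set of variables. -/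
noncomputable def charA (T : Set V) : V → Bool := fun w => if w ∈ T then true else false

lemma charA_eq_true {T : Set V} {w : V} : charA T w = true ↔ w ∈ T := by
  by_cases h : w ∈ T <;> simp [charA, h]

lemma evalCNF_charA (hPH : IsPureHornCNF Φ)
    (hcl : ∀ C ∈ Φ, ∀ v : V, C.pos = {v} → ↑C.neg ⊆ T → v ∈ T) :
    evalCNF Φ (charA T) := by
  intro C hC
  obtain ⟨v, hv⟩ := (hPH C hC).2
  by_cases hn : ↑C.neg ⊆ T
  · exact Or.inl ⟨v, by simp [hv], charA_eq_true.mpr (hcl C hC v hv hn)⟩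
  · obtain ⟨w, hw, hwT⟩ := Set.not_subset.mp hn
    refine Or.inr ⟨w, hw, ?_⟩
    rw [← Bool.not_eq_true, charA_eq_true]
    exact hwT

lemma fcClosure_true {a : V → Bool} (ha : evalCNF Δ a) (hQ : ∀ q ∈ Q, a q = true) :
    ∀ w ∈ fcClosure Δ Q, a w = true := by
  intro w hw
  refine fcClosure_le (Φ := Δ) (T := {w | a w = true}) hQ ?_ hw
  intro C hC v hp hn
  rcases ha C hC with ⟨u, hu, hau⟩ | ⟨u, hu, hau⟩
  · rw [hp, Finset.mem_singleton] at hu; subst hu; exact hau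
  · exact absurd (hn hu) (by simp [hau])

lemma implicate_of_rep {h : (V → Bool) → Prop} (hrep : Represents Δ h)
    {C : Clause V} (hC : C ∈ Δ) : Implicate h C :=
  fun a hev hha => hev ((hrep a).mpr hha C hC)

lemma head_mem_fcClosure {h : (V → Bool) → Prop} (hPH : IsPureHornCNF Δ)
    (hrep : Represents Δ h) {C : Clause V} (hC : Implicate h C) {w : V}
    (hp : C.pos = {w}) (hQ : ↑C.neg ⊆ Q) : w ∈ fcClosure Δ Q := by
  by_contra hw
  refine hC (charA (fcClosure Δ Q)) ?_ ((hrep _).mp (evalCNF_charA hPH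
    fun C' hC' v hp' hn' => fcClosure_closed hC' hp' hn'))
  rintro (⟨v, hv, hva⟩ | ⟨v, hv, hva⟩)
  · rw [hp, Finset.mem_singleton] at hv; subst hv
    exact hw (charA_eq_true.mp hva)
  · exact absurd (charA_eq_true.mpr (le_fcClosure (Φ := Δ) (hQ hv))) (by simp [hva])

lemma implicate_of_head {h : (V → Bool) → Prop} (hrep : Represents Δ h) {w : V}
    {S : Finset V} (hw : w ∈ fcClosure Δ ↑S) : Implicate h ⟨{w}, S⟩ := by
  intro a hev hha
  have := fcClosure_true (Q := ↑S) ((hrep a).mpr hha) ?_ w hw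
  · exact hev (Or.inl ⟨w, Finset.mem_singleton_self w, this⟩)
  · intro q hq
    by_contra hfalse
    exact hev (Or.inr ⟨q, hq, by simpa using hfalse⟩)

lemma fcClosure_le_fcClosure {h : (V → Bool) → Prop} (hPH : IsPureHornCNF Δ)
    (hrep : Represents Δ h) (hΓ : ∀ C ∈ Γ, Implicate h C) :
    fcClosure Γ Q ⊆ fcClosure Δ Q :=
  fcClosure_le le_fcClosure fun C hC v hp hn =>
    fcClosure_idem (head_mem_fcClosure hPH hrep (hΓ C hC) hp hn)

lemma mem_of_mem_fcClosure_no_head {w : V}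
    (hnot : ∀ C ∈ Γ, C.pos ≠ {w}) (hw : w ∈ fcClosure Γ Q) : w ∈ Q := by
  by_contra hwQ
  have hsub : fcClosure Γ Q ⊆ fcClosure Γ Q \ {w} := by
    refine fcClosure_le ?_ ?_
    · exact fun q hq => ⟨le_fcClosure hq, fun h => hwQ (h ▸ hq)⟩
    · intro C hC v hp hn
      refine ⟨fcClosure_closed hC hp fun u hu => (hn hu).1, ?_⟩
      rintro rfl
      exact hnot C hC hp
  exact (hsub hw).2 rfl

lemma fcClosure_insert {w' : V}
    (hstep : ∀ C ∈ Γ, ∀ v : V, C.pos = {v} → w' ∈ C.neg → v ∈ fcClosure Γ Q) :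
    fcClosure Γ (insert w' Q) ⊆ insert w' (fcClosure Γ Q) := by
  refine fcClosure_le (Set.insert_subset_insert le_fcClosure) ?_
  intro C hC v hp hn
  by_cases hw : w' ∈ C.neg
  · exact Set.mem_insert_iff.mpr (Or.inr (hstep C hC v hp hw))
  · refine Set.mem_insert_iff.mpr (Or.inr (fcClosure_closed hC hp ?_))
    intro u hu
    rcases Set.mem_insert_iff.mp (hn hu) with rfl | h
    · exact absurd hu hw
    · exact h

end ClosureAux

/-! ### Auxiliary lemmas: the canonical construction -/

section CanonAux
variable {X Y A B : Type*} [Fintype X] [Fintype Y] [Fintype A] [Fintype B]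
  [DecidableEq X] [DecidableEq Y] [DecidableEq A] [DecidableEq B]

/-- All `u` variables. -/
def allU (X Y A B : Type*) [Fintype X] [Fintype Y] [Fintype A] [Fintype B]
    [DecidableEq X] [DecidableEq Y] [DecidableEq A] [DecidableEq B] :
    Finset (PV X Y A B) :=
  Finset.univ.image PV.u

/-- All valid `e` variables. -/
def allE (I : LabelCover X Y A B) (d : ℕ) : Finset (PV X Y A B) :=
  (I.E ×ˢ Finset.Icc 1 d).image fun p => PV.e p.1.1 p.1.2 p.2

/-- All valid `el` variables. -/
def allEL (I : LabelCover X Y A B) (d : ℕ) : Finset (PV X Y A B) :=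
  ((I.E ×ˢ (Finset.univ : Finset B)) ×ˢ Finset.Icc 1 d).image fun p =>
    PV.el p.1.1.1 p.1.1.2 p.1.2 p.2

/-- All variables which are heads of clauses of `Φ`. -/
def validVars (I : LabelCover X Y A B) (d : ℕ) : Finset (PV X Y A B) :=
  allU X Y A B ∪ allE I d ∪ allEL I d

variable {I : LabelCover X Y A B} {d t : ℕ}

lemma mem_allU (ℓ : Lab X Y A B) : PV.u ℓ ∈ allU X Y A B :=
  Finset.mem_image.mpr ⟨ℓ, Finset.mem_univ _, rfl⟩

lemma mem_allE {x : X} {y : Y} {i : ℕ} (hxy : (x, y) ∈ I.E) (hi : i ∈ Finset.Icc 1 d) :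
    PV.e x y i ∈ allE I d :=
  Finset.mem_image.mpr ⟨((x, y), i), Finset.mem_product.mpr ⟨hxy, hi⟩, rfl⟩

lemma mem_allEL {x : X} {y : Y} {b : B} {i : ℕ} (hxy : (x, y) ∈ I.E)
    (hi : i ∈ Finset.Icc 1 d) : PV.el x y b i ∈ allEL I d :=
  Finset.mem_image.mpr ⟨(((x, y), b), i),
    Finset.mem_product.mpr ⟨Finset.mem_product.mpr ⟨hxy, Finset.mem_univ _⟩, hi⟩, rfl⟩

lemma v_not_mem_validVars (j : ℕ) : PV.v j ∉ validVars I d := by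
  simp [validVars, allU, allE, allEL]

lemma mem_clA {x : X} {y : Y} {a : A} {b : B} {i : ℕ} (hxy : (x, y) ∈ I.E)
    (hab : (a, b) ∈ I.cst (x, y)) (hi : i ∈ Finset.Icc 1 d) :
    (⟨{PV.el x y b i}, {PV.u (Sum.inl (x, a)), PV.u (Sum.inr (y, b))}⟩ :
      Clause (PV X Y A B)) ∈ clA I d :=
  Finset.mem_biUnion.mpr ⟨((x, y), i), Finset.mem_product.mpr ⟨hxy, hi⟩,
    Finset.mem_image.mpr ⟨(a, b), hab, rfl⟩⟩

lemma mem_clB {x : X} {y : Y} {i : ℕ} (b : B) (hxy : (x, y) ∈ I.E)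
    (hi : i ∈ Finset.Icc 1 d) :
    (⟨{PV.e x y i}, (Nbr I y).image fun z => PV.el z y b i⟩ :
      Clause (PV X Y A B)) ∈ clB I d :=
  Finset.mem_image.mpr ⟨(((x, y), b), i),
    Finset.mem_product.mpr ⟨Finset.mem_product.mpr ⟨hxy, Finset.mem_univ _⟩, hi⟩, rfl⟩

lemma mem_clC {x : X} {y : Y} {i : ℕ} (b : B) (hxy : (x, y) ∈ I.E)
    (hi : i ∈ Finset.Icc 1 d) :
    (⟨{PV.el x y b i}, {PV.e x y i}⟩ : Clause (PV X Y A B)) ∈ clC I d :=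
  Finset.mem_image.mpr ⟨(((x, y), b), i),
    Finset.mem_product.mpr ⟨Finset.mem_product.mpr ⟨hxy, Finset.mem_univ _⟩, hi⟩, rfl⟩

lemma mem_clD (ℓ : Lab X Y A B) :
    (⟨{PV.u ℓ}, bigBody I d⟩ : Clause (PV X Y A B)) ∈ clD I d :=
  Finset.mem_image.mpr ⟨ℓ, Finset.mem_univ _, rfl⟩

lemma mem_clE {j : ℕ} (hj : j ∈ Finset.Icc 1 t) (ℓ : Lab X Y A B) :
    (⟨{PV.u ℓ}, {PV.v j}⟩ : Clause (PV X Y A B)) ∈ clE X Y A B t :=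
  Finset.mem_image.mpr ⟨(j, ℓ), Finset.mem_product.mpr ⟨hj, Finset.mem_univ _⟩, rfl⟩

lemma clA_elim {C : Clause (PV X Y A B)} (hC : C ∈ clA I d) :
    ∃ x y a b i, (x, y) ∈ I.E ∧ (a, b) ∈ I.cst (x, y) ∧ i ∈ Finset.Icc 1 d ∧
      C = ⟨{PV.el x y b i}, {PV.u (Sum.inl (x, a)), PV.u (Sum.inr (y, b))}⟩ := by
  obtain ⟨⟨⟨x, y⟩, i⟩, hp, hC⟩ := Finset.mem_biUnion.mp hC
  obtain ⟨⟨a, b⟩, hab, rfl⟩ := Finset.mem_image.mp hC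
  obtain ⟨hE, hi⟩ := Finset.mem_product.mp hp
  exact ⟨x, y, a, b, i, hE, hab, hi, rfl⟩

lemma clB_elim {C : Clause (PV X Y A B)} (hC : C ∈ clB I d) :
    ∃ x y b i, (x, y) ∈ I.E ∧ i ∈ Finset.Icc 1 d ∧
      C = ⟨{PV.e x y i}, (Nbr I y).image fun z => PV.el z y b i⟩ := by
  obtain ⟨⟨⟨⟨x, y⟩, b⟩, i⟩, hp, rfl⟩ := Finset.mem_image.mp hC
  obtain ⟨hp1, hi⟩ := Finset.mem_product.mp hp
  obtain ⟨hE, -⟩ := Finset.mem_product.mp hp1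
  exact ⟨x, y, b, i, hE, hi, rfl⟩

lemma clC_elim {C : Clause (PV X Y A B)} (hC : C ∈ clC I d) :
    ∃ x y b i, (x, y) ∈ I.E ∧ i ∈ Finset.Icc 1 d ∧
      C = ⟨{PV.el x y b i}, {PV.e x y i}⟩ := by
  obtain ⟨⟨⟨⟨x, y⟩, b⟩, i⟩, hp, rfl⟩ := Finset.mem_image.mp hC
  obtain ⟨hp1, hi⟩ := Finset.mem_product.mp hp
  obtain ⟨hE, -⟩ := Finset.mem_product.mp hp1
  exact ⟨x, y, b, i, hE, hi, rfl⟩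

lemma clD_elim {C : Clause (PV X Y A B)} (hC : C ∈ clD I d) :
    ∃ ℓ, C = ⟨{PV.u ℓ}, bigBody I d⟩ := by
  obtain ⟨ℓ, -, rfl⟩ := Finset.mem_image.mp hC
  exact ⟨ℓ, rfl⟩

lemma clE_elim {C : Clause (PV X Y A B)} (hC : C ∈ clE X Y A B t) :
    ∃ j ℓ, j ∈ Finset.Icc 1 t ∧ C = ⟨{PV.u ℓ}, {PV.v j}⟩ := by
  obtain ⟨⟨j, ℓ⟩, hp, rfl⟩ := Finset.mem_image.mp hC
  exact ⟨j, ℓ, (Finset.mem_product.mp hp).1, rfl⟩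

lemma mem_phi_cases {C : Clause (PV X Y A B)} (hC : C ∈ PhiCNF I d t) :
    C ∈ clA I d ∨ C ∈ clB I d ∨ C ∈ clC I d ∨ C ∈ clD I d ∨ C ∈ clE X Y A B t := by
  simp only [PhiCNF, PsiCNF, Finset.mem_union] at hC
  tauto

lemma mem_psi_cases {C : Clause (PV X Y A B)} (hC : C ∈ PsiCNF I d) :
    C ∈ clA I d ∨ C ∈ clB I d ∨ C ∈ clC I d ∨ C ∈ clD I d := by
  simp only [PsiCNF, Finset.mem_union] at hC
  tauto

lemma psi_subset_phi : PsiCNF I d ⊆ PhiCNF I d t :=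
  Finset.subset_union_left

lemma mem_bigBody_elim {w : PV X Y A B} (hw : w ∈ bigBody I d) :
    ∃ x y i, (x, y) ∈ I.E ∧ i ∈ Finset.Icc 1 d ∧ w = PV.e x y i := by
  obtain ⟨⟨⟨x, y⟩, i⟩, hp, rfl⟩ := Finset.mem_image.mp hw
  obtain ⟨hE, hi⟩ := Finset.mem_product.mp hp
  exact ⟨x, y, i, hE, hi, rfl⟩

lemma mem_bigBody {x : X} {y : Y} {i : ℕ} (hxy : (x, y) ∈ I.E)
    (hi : i ∈ Finset.Icc 1 d) : PV.e x y i ∈ bigBody I d :=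
  Finset.mem_image.mpr ⟨((x, y), i), Finset.mem_product.mpr ⟨hxy, hi⟩, rfl⟩

/-- Every clause of `Φ` is a pure Horn clause whose head is a valid variable. -/
lemma phi_shape {C : Clause (PV X Y A B)} (hC : C ∈ PhiCNF I d t) :
    C.IsClause ∧ ∃ w, C.pos = {w} ∧ w ∈ validVars I d := by
  rcases mem_phi_cases hC with h | h | h | h | h
  · obtain ⟨x, y, a, b, i, hE, hab, hi, rfl⟩ := clA_elim h
    exact ⟨by simp [Clause.IsClause], _, rfl,
      Finset.mem_union.mpr (Or.inr (mem_allEL hE hi))⟩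
  · obtain ⟨x, y, b, i, hE, hi, rfl⟩ := clB_elim h
    refine ⟨?_, _, rfl, Finset.mem_union.mpr (Or.inl
      (Finset.mem_union.mpr (Or.inr (mem_allE hE hi))))⟩
    simp only [Clause.IsClause, Finset.disjoint_left, Finset.mem_singleton]
    rintro w rfl hw
    obtain ⟨z, -, h'⟩ := Finset.mem_image.mp hw
    exact nomatch h'
  · obtain ⟨x, y, b, i, hE, hi, rfl⟩ := clC_elim h
    exact ⟨by simp [Clause.IsClause], _, rfl,
      Finset.mem_union.mpr (Or.inr (mem_allEL hE hi))⟩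
  · obtain ⟨ℓ, rfl⟩ := clD_elim h
    refine ⟨?_, _, rfl, Finset.mem_union.mpr (Or.inl
      (Finset.mem_union.mpr (Or.inl (mem_allU ℓ))))⟩
    simp only [Clause.IsClause, Finset.disjoint_left, Finset.mem_singleton]
    rintro w rfl hw
    obtain ⟨x, y, i, -, -, h'⟩ := mem_bigBody_elim hw
    exact nomatch h'
  · obtain ⟨j, ℓ, hj, rfl⟩ := clE_elim h
    exact ⟨by simp [Clause.IsClause], _, rfl, Finset.mem_union.mpr (Or.inl
      (Finset.mem_union.mpr (Or.inl (mem_allU ℓ))))⟩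

lemma phi_pureHorn : IsPureHornCNF (PhiCNF I d t) := fun C hC =>
  ⟨(phi_shape hC).1, let ⟨w, hw, _⟩ := (phi_shape hC).2; ⟨w, hw⟩⟩

lemma psi_pureHorn : IsPureHornCNF (PsiCNF I d) := fun C hC =>
  phi_pureHorn (t := 0) C (psi_subset_phi hC)

lemma phi_no_v_head {C : Clause (PV X Y A B)} (hC : C ∈ PhiCNF I d t) (j : ℕ) :
    C.pos ≠ {PV.v j} := by
  obtain ⟨-, w, hw, hwv⟩ := phi_shape hC
  rw [hw]
  intro h
  rw [Finset.singleton_inj] at h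
  exact v_not_mem_validVars j (h ▸ hwv)

/-- Clauses of `Ψ` contain no `v` variables at all. -/
lemma psi_no_v {C : Clause (PV X Y A B)} (hC : C ∈ PsiCNF I d) (j : ℕ) :
    PV.v j ∉ C.pos ∧ PV.v j ∉ C.neg := by
  rcases mem_psi_cases hC with h | h | h | h
  · obtain ⟨x, y, a, b, i, -, -, -, rfl⟩ := clA_elim h
    simp
  · obtain ⟨x, y, b, i, -, -, rfl⟩ := clB_elim h
    constructor
    · simp
    · intro hw
      obtain ⟨z, -, h'⟩ := Finset.mem_image.mp hw
      exact nomatch h'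
  · obtain ⟨x, y, b, i, -, -, rfl⟩ := clC_elim h
    simp
  · obtain ⟨ℓ, rfl⟩ := clD_elim h
    constructor
    · simp
    · intro hw
      obtain ⟨x, y, i, -, -, h'⟩ := mem_bigBody_elim hw
      exact nomatch h'

/-- `v j` with `j ∉ [t]` appears in no clause of `Φ`. -/
lemma phi_no_v_out {C : Clause (PV X Y A B)} (hC : C ∈ PhiCNF I d t) {j : ℕ}
    (hj : j ∉ Finset.Icc 1 t) : PV.v j ∉ C.neg := by
  rcases Finset.mem_union.mp hC with h | h
  · exact (psi_no_v h j).2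
  · obtain ⟨j', ℓ, hj', rfl⟩ := clE_elim h
    simp only [Finset.mem_singleton]
    intro h'
    cases h'
    exact hj hj'

end CanonAux

section DeriveAux
variable {X Y A B : Type*} [Fintype X] [Fintype Y] [Fintype A] [Fintype B]
  [DecidableEq X] [DecidableEq Y] [DecidableEq A] [DecidableEq B]
variable {I : LabelCover X Y A B} {d t : ℕ}

lemma clA_subset : clA I d ⊆ PsiCNF I d := fun C hC =>
  Finset.mem_union_left _ (Finset.mem_union_left _ (Finset.mem_union_left _ hC))

lemma clB_subset : clB I d ⊆ PsiCNF I d := fun C hC =>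
  Finset.mem_union_left _ (Finset.mem_union_left _ (Finset.mem_union_right _ hC))

lemma clC_subset : clC I d ⊆ PsiCNF I d := fun C hC =>
  Finset.mem_union_left _ (Finset.mem_union_right _ hC)

lemma clD_subset : clD I d ⊆ PsiCNF I d := fun C hC => Finset.mem_union_right _ hC

lemma clE_subset : clE X Y A B t ⊆ PhiCNF I d t := fun C hC =>
  Finset.mem_union_right _ hC

lemma mem_Nbr {y : Y} {z : X} : z ∈ Nbr I y ↔ (z, y) ∈ I.E := by
  simp [Nbr]

/-- The forward chaining engine: from the `u` variables of a total cover, every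
valid variable can be derived using the clauses of `Ψ`. -/
lemma fullDerive {Φ' : Finset (Clause (PV X Y A B))} (hsub : PsiCNF I d ⊆ Φ')
    {f : X → Finset A} {g : Y → Finset B} (hcov : I.IsTotalCover f g)
    {Q : Set (PV X Y A B)}
    (huf : ∀ x : X, ∀ a ∈ f x, PV.u (Sum.inl (x, a)) ∈ fcClosure Φ' Q)
    (hug : ∀ y : Y, ∀ b ∈ g y, PV.u (Sum.inr (y, b)) ∈ fcClosure Φ' Q) :
    ∀ w ∈ validVars I d, w ∈ fcClosure Φ' Q := by
  have st1 : ∀ z y, (z, y) ∈ I.E → ∀ b ∈ g y, ∀ i ∈ Finset.Icc 1 d,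
      PV.el z y b i ∈ fcClosure Φ' Q := by
    intro z y hzy b hb i hi
    obtain ⟨a, haf, hab⟩ := hcov.2 (z, y) hzy b hb
    refine fcClosure_closed (hsub (clA_subset (mem_clA hzy hab hi))) rfl ?_
    intro w hw
    simp only [Finset.coe_insert, Finset.coe_singleton, Set.mem_insert_iff,
      Set.mem_singleton_iff] at hw
    rcases hw with rfl | rfl
    · exact huf z a haf
    · exact hug y b hb
  have st2 : ∀ x y, (x, y) ∈ I.E → ∀ i ∈ Finset.Icc 1 d,
      PV.e x y i ∈ fcClosure Φ' Q := by
    intro x y hxy i hi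
    obtain ⟨b, hb⟩ := hcov.1 y
    refine fcClosure_closed (hsub (clB_subset (mem_clB b hxy hi))) rfl ?_
    intro w hw
    simp only [Finset.coe_image, Set.mem_image, Finset.mem_coe] at hw
    obtain ⟨z, hz, rfl⟩ := hw
    exact st1 z y (mem_Nbr.mp hz) b hb i hi
  have st3 : ∀ ℓ : Lab X Y A B, PV.u ℓ ∈ fcClosure Φ' Q := by
    intro ℓ
    refine fcClosure_closed (hsub (clD_subset (mem_clD ℓ))) rfl ?_
    intro w hw
    obtain ⟨x, y, i, hE, hi, rfl⟩ := mem_bigBody_elim hw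
    exact st2 x y hE i hi
  have st4 : ∀ x y b i, (x, y) ∈ I.E → i ∈ Finset.Icc 1 d →
      PV.el x y b i ∈ fcClosure Φ' Q := by
    intro x y b i hxy hi
    refine fcClosure_closed (hsub (clC_subset (mem_clC b hxy hi))) rfl ?_
    intro w hw
    simp only [Finset.coe_singleton, Set.mem_singleton_iff] at hw
    subst hw
    exact st2 x y hxy i hi
  intro w hw
  rcases Finset.mem_union.mp hw with hw | hw
  · rcases Finset.mem_union.mp hw with hw | hw
    · obtain ⟨ℓ, -, rfl⟩ := Finset.mem_image.mp hw
      exact st3 ℓ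
    · obtain ⟨⟨⟨x, y⟩, i⟩, hp, rfl⟩ := Finset.mem_image.mp hw
      obtain ⟨hE, hi⟩ := Finset.mem_product.mp hp
      exact st2 x y hE i hi
  · obtain ⟨⟨⟨⟨x, y⟩, b⟩, i⟩, hp, rfl⟩ := Finset.mem_image.mp hw
    obtain ⟨hp1, hi⟩ := Finset.mem_product.mp hp
    exact st4 x y b i (Finset.mem_product.mp hp1).1 hi

/-- All valid variables belong to the closure of `{v j}` for `j ∈ [t]`. -/
lemma valid_subset_closure_vj {f : X → Finset A} {g : Y → Finset B}
    (hcov : I.IsTotalCover f g) {j : ℕ} (hj : j ∈ Finset.Icc 1 t) :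
    ∀ w ∈ validVars I d, w ∈ fcClosure (PhiCNF I d t) {PV.v j} := by
  have hu : ∀ ℓ : Lab X Y A B, PV.u ℓ ∈ fcClosure (PhiCNF I d t) {PV.v j} := by
    intro ℓ
    refine fcClosure_closed (clE_subset (mem_clE hj ℓ)) rfl ?_
    intro w hw
    simp only [Finset.coe_singleton, Set.mem_singleton_iff] at hw
    subst hw
    exact le_fcClosure rfl
  exact fullDerive psi_subset_phi hcov (fun x a _ => hu _) (fun y b _ => hu _)

/-- Setting all `v` variables to false. -/
def stripV : (PV X Y A B → Bool) → PV X Y A B → Bool := fun a w =>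
  match w with
  | PV.v _ => false
  | w' => a w'

lemma stripV_eq {a : PV X Y A B → Bool} {w : PV X Y A B} (hw : ∀ j, w ≠ PV.v j) :
    stripV a w = a w := by
  cases w with
  | u ℓ => rfl
  | e x y i => rfl
  | el x y b i => rfl
  | v j => exact absurd rfl (hw j)

lemma eval_stripV {C : Clause (PV X Y A B)}
    (hv : ∀ j, PV.v j ∉ C.pos ∧ PV.v j ∉ C.neg) (a : PV X Y A B → Bool) :
    C.eval (stripV a) ↔ C.eval a := by
  have key : ∀ w, (w ∈ C.pos ∨ w ∈ C.neg) → stripV a w = a w := by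
    intro w hw
    refine stripV_eq fun j hj => ?_
    subst hj
    rcases hw with h | h
    exacts [(hv j).1 h, (hv j).2 h]
  unfold Clause.eval
  constructor <;> rintro (⟨w, hw, hval⟩ | ⟨w, hw, hval⟩)
  · exact Or.inl ⟨w, hw, by rw [← key w (Or.inl hw)]; exact hval⟩
  · exact Or.inr ⟨w, hw, by rw [← key w (Or.inr hw)]; exact hval⟩
  · exact Or.inl ⟨w, hw, by rw [key w (Or.inl hw)]; exact hval⟩
  · exact Or.inr ⟨w, hw, by rw [key w (Or.inr hw)]; exact hval⟩

/-- A `v`-free implicate of `h` is an implicate of `g`. -/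
lemma implicate_g_of_h {C : Clause (PV X Y A B)}
    (hfree : ∀ j, PV.v j ∉ C.pos ∧ PV.v j ∉ C.neg)
    (himp : Implicate (hFun I d t) C) : Implicate (gFun I d) C := by
  intro a hev hga
  refine himp (stripV a) (fun h => hev ((eval_stripV hfree a).mp h)) ?_
  intro C' hC'
  rcases Finset.mem_union.mp hC' with h | h
  · exact (eval_stripV (psi_no_v h) a).mpr (hga C' h)
  · obtain ⟨j, ℓ, hj, rfl⟩ := clE_elim h
    exact Or.inr ⟨PV.v j, Finset.mem_singleton_self _, rfl⟩

end DeriveAux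

section CardAux
variable {X Y A B : Type*} [Fintype X] [Fintype Y] [Fintype A] [Fintype B]
  [DecidableEq X] [DecidableEq Y] [DecidableEq A] [DecidableEq B]
variable {I : LabelCover X Y A B} {d t : ℕ}

lemma card_allU :
    (allU X Y A B).card = Fintype.card X * Fintype.card A +
      Fintype.card Y * Fintype.card B := by
  rw [allU, Finset.card_image_of_injective _ (fun a b h => by injection h),
    Finset.card_univ]
  simp [Fintype.card_sum]

lemma card_allE : (allE I d).card = I.E.card * d := by
  rw [allE, Finset.card_image_of_injOn, Finset.card_product, Nat.card_Icc,
    Nat.add_sub_cancel]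
  · rintro ⟨⟨x, y⟩, i⟩ - ⟨⟨x', y'⟩, i'⟩ - h
    simp only [PV.e.injEq] at h
    obtain ⟨rfl, rfl, rfl⟩ := h
    rfl

lemma card_allEL : (allEL I d).card = I.E.card * Fintype.card B * d := by
  rw [allEL, Finset.card_image_of_injOn, Finset.card_product, Finset.card_product,
    Nat.card_Icc, Finset.card_univ, Nat.add_sub_cancel]
  · rintro ⟨⟨⟨x, y⟩, b⟩, i⟩ - ⟨⟨⟨x', y'⟩, b'⟩, i'⟩ - h
    simp only [PV.el.injEq] at h
    obtain ⟨rfl, rfl, rfl, rfl⟩ := h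
    rfl

lemma card_validVars :
    (validVars I d).card = (Fintype.card X * Fintype.card A +
      Fintype.card Y * Fintype.card B) + I.E.card * d +
      I.E.card * Fintype.card B * d := by
  rw [validVars, Finset.card_union_of_disjoint, Finset.card_union_of_disjoint,
    card_allU, card_allE, card_allEL]
  · rw [Finset.disjoint_left]
    intro w hw
    obtain ⟨ℓ, -, rfl⟩ := Finset.mem_image.mp hw
    intro hw'
    obtain ⟨p, -, h⟩ := Finset.mem_image.mp hw'
    exact nomatch h
  · rw [Finset.disjoint_left]
    intro w hw hw'
    obtain ⟨p, -, h'⟩ := Finset.mem_image.mp hw'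
    rcases Finset.mem_union.mp hw with hw | hw
    · obtain ⟨ℓ, -, rfl⟩ := Finset.mem_image.mp hw
      exact nomatch h'
    · obtain ⟨q, -, rfl⟩ := Finset.mem_image.mp hw
      exact nomatch h'

lemma psi_card_le :
    (PsiCNF I d).card ≤ I.E.card * d * (Fintype.card A * Fintype.card B) +
      I.E.card * Fintype.card B * d + I.E.card * Fintype.card B * d +
      (Fintype.card X * Fintype.card A + Fintype.card Y * Fintype.card B) := by
  have hA : (clA I d).card ≤ I.E.card * d * (Fintype.card A * Fintype.card B) := by
    refine (Finset.card_biUnion_le).trans ?_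
    calc ∑ p ∈ I.E ×ˢ Finset.Icc 1 d, ((I.cst p.1).image _).card
        ≤ ∑ _p ∈ I.E ×ˢ Finset.Icc 1 d, Fintype.card A * Fintype.card B := by
          refine Finset.sum_le_sum fun p _ => ?_
          exact (Finset.card_image_le).trans
            ((Finset.card_le_univ _).trans (by simp))
      _ = I.E.card * d * (Fintype.card A * Fintype.card B) := by
          rw [Finset.sum_const, smul_eq_mul, Finset.card_product, Nat.card_Icc,
            Nat.add_sub_cancel]
  have hB : (clB I d).card ≤ I.E.card * Fintype.card B * d := by
    refine (Finset.card_image_le).trans ?_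
    rw [Finset.card_product, Finset.card_product, Nat.card_Icc, Finset.card_univ,
      Nat.add_sub_cancel]
  have hC : (clC I d).card ≤ I.E.card * Fintype.card B * d := by
    refine (Finset.card_image_le).trans ?_
    rw [Finset.card_product, Finset.card_product, Nat.card_Icc, Finset.card_univ,
      Nat.add_sub_cancel]
  have hD : (clD I d).card ≤ Fintype.card X * Fintype.card A +
      Fintype.card Y * Fintype.card B := by
    refine (Finset.card_image_le).trans ?_
    rw [Finset.card_univ]
    simp [Fintype.card_sum]
  calc (PsiCNF I d).card
      ≤ (clA I d ∪ clB I d ∪ clC I d).card + (clD I d).card := Finset.card_union_le _ _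
    _ ≤ ((clA I d ∪ clB I d).card + (clC I d).card) + (clD I d).card := by
        exact Nat.add_le_add_right (Finset.card_union_le _ _) _
    _ ≤ (((clA I d).card + (clB I d).card) + (clC I d).card) + (clD I d).card := by
        exact Nat.add_le_add_right (Nat.add_le_add_right (Finset.card_union_le _ _) _) _
    _ ≤ _ := by omega

/-- The labels used by a labeling, as `u`-variable indices. -/
def coverLabels (f : X → Finset A) (g : Y → Finset B) : Finset (Lab X Y A B) :=
  ((Finset.univ : Finset X).biUnion fun x => (f x).image fun a => Sum.inl (x, a)) ∪
  ((Finset.univ : Finset Y).biUnion fun y => (g y).image fun b => Sum.inr (y, b))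

lemma card_coverLabels {f : X → Finset A} {g : Y → Finset B}
    (htight : LabelCover.Tight g) :
    (coverLabels f g).card = (∑ x, (f x).card) + Fintype.card Y := by
  rw [coverLabels, Finset.card_union_of_disjoint, Finset.card_biUnion,
    Finset.card_biUnion]
  · congr 1
    · exact Finset.sum_congr rfl fun x _ =>
        Finset.card_image_of_injective _ (fun a b h => by
          simpa using h)
    · rw [← Finset.card_univ]
      rw [Finset.card_eq_sum_ones Finset.univ]
      refine Finset.sum_congr rfl fun y _ => ?_
      rw [Finset.card_image_of_injective _ (fun a b h => by simpa using h)]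
      exact htight y
  · intro y1 _ y2 _ hne
    rw [Function.onFun, Finset.disjoint_left]
    intro w hw hw'
    obtain ⟨b, -, rfl⟩ := Finset.mem_image.mp hw
    obtain ⟨b', -, h'⟩ := Finset.mem_image.mp hw'
    apply hne
    injection h' with h'
    exact (Prod.ext_iff.mp h').1.symm
  · intro x1 _ x2 _ hne
    rw [Function.onFun, Finset.disjoint_left]
    intro w hw hw'
    obtain ⟨a, -, rfl⟩ := Finset.mem_image.mp hw
    obtain ⟨a', -, h'⟩ := Finset.mem_image.mp hw'
    apply hne
    injection h' with h'
    exact (Prod.ext_iff.mp h').1.symm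
  · rw [Finset.disjoint_left]
    intro w hw hw'
    obtain ⟨x, -, hx⟩ := Finset.mem_biUnion.mp hw
    obtain ⟨a, -, rfl⟩ := Finset.mem_image.mp hx
    obtain ⟨y, -, hy⟩ := Finset.mem_biUnion.mp hw'
    obtain ⟨b, -, h⟩ := Finset.mem_image.mp hy
    exact nomatch h

end CardAux

section UpperAux
variable {X Y A B : Type*} [Fintype X] [Fintype Y] [Fintype A] [Fintype B]
  [DecidableEq X] [DecidableEq Y] [DecidableEq A] [DecidableEq B]
variable {I : LabelCover X Y A B} {d t : ℕ} {f : X → Finset A} {g : Y → Finset B}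

/-- The economical representation of `h` built from a total cover. -/
def PhiF (I : LabelCover X Y A B) (d t : ℕ) (f : X → Finset A) (g : Y → Finset B) :
    Finset (Clause (PV X Y A B)) :=
  PsiCNF I d ∪ (Finset.Icc 1 t ×ˢ coverLabels f g).image fun p =>
    (⟨{PV.u p.2}, {PV.v p.1}⟩ : Clause (PV X Y A B))

lemma phiF_subset : PhiF I d t f g ⊆ PhiCNF I d t := by
  apply Finset.union_subset psi_subset_phi
  intro C hC
  obtain ⟨⟨j, ℓ⟩, hp, rfl⟩ := Finset.mem_image.mp hC
  exact clE_subset (mem_clE (Finset.mem_product.mp hp).1 ℓ)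

lemma phiF_pureHorn : IsPureHornCNF (PhiF I d t f g) := fun C hC =>
  phi_pureHorn C (phiF_subset hC)

lemma phiF_card (htight : LabelCover.Tight g) :
    (PhiF I d t f g).card ≤ (PsiCNF I d).card +
      t * ((∑ x, (f x).card) + Fintype.card Y) := by
  refine (Finset.card_union_le _ _).trans ?_
  refine Nat.add_le_add_left ((Finset.card_image_le).trans ?_) _
  rw [Finset.card_product, card_coverLabels htight, Nat.card_Icc, Nat.add_sub_cancel]

lemma mem_coverLabels_inl {x : X} {a : A} (ha : a ∈ f x) :
    (Sum.inl (x, a) : Lab X Y A B) ∈ coverLabels f g :=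
  Finset.mem_union_left _ (Finset.mem_biUnion.mpr
    ⟨x, Finset.mem_univ _, Finset.mem_image.mpr ⟨a, ha, rfl⟩⟩)

lemma mem_coverLabels_inr {y : Y} {b : B} (hb : b ∈ g y) :
    (Sum.inr (y, b) : Lab X Y A B) ∈ coverLabels f g :=
  Finset.mem_union_right _ (Finset.mem_biUnion.mpr
    ⟨y, Finset.mem_univ _, Finset.mem_image.mpr ⟨b, hb, rfl⟩⟩)

lemma phiF_represents (hcov : I.IsTotalCover f g) :
    Represents (PhiF I d t f g) (hFun I d t) := by
  intro a
  constructor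
  · intro ha C hC
    rcases Finset.mem_union.mp hC with h | h
    · exact ha C (Finset.mem_union_left _ h)
    · obtain ⟨j, ℓ, hj, rfl⟩ := clE_elim h
      by_cases hvj : a (PV.v j) = true
      · refine Or.inl ⟨PV.u ℓ, Finset.mem_singleton_self _, ?_⟩
        refine fcClosure_true (Δ := PhiF I d t f g) (Q := {PV.v j}) ha ?_ _ ?_
        · intro q hq
          rw [Set.mem_singleton_iff.mp hq]
          exact hvj
        · have hlab : ∀ ℓ' ∈ coverLabels f g,
              PV.u ℓ' ∈ fcClosure (PhiF I d t f g) {PV.v j} := by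
            intro ℓ' hℓ'
            refine fcClosure_closed (Finset.mem_union_right _ (Finset.mem_image.mpr
              ⟨(j, ℓ'), Finset.mem_product.mpr ⟨hj, hℓ'⟩, rfl⟩)) rfl ?_
            intro w hw
            simp only [Finset.coe_singleton, Set.mem_singleton_iff] at hw
            subst hw
            exact le_fcClosure rfl
          refine fullDerive (Φ' := PhiF I d t f g) Finset.subset_union_left hcov
            (fun x a' ha' => hlab _ (mem_coverLabels_inl ha'))
            (fun y b hb => hlab _ (mem_coverLabels_inr hb)) _ ?_
          exact Finset.mem_union.mpr (Or.inl (Finset.mem_union.mpr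
            (Or.inl (mem_allU ℓ))))
      · exact Or.inr ⟨PV.v j, Finset.mem_singleton_self _, by simpa using hvj⟩
  · intro ha C hC
    exact ha C (phiF_subset hC)

end UpperAux

section ExtractAux
variable {X Y A B : Type*} [Fintype X] [Fintype Y] [Fintype A] [Fintype B]
  [DecidableEq X] [DecidableEq Y] [DecidableEq A] [DecidableEq B]
variable {I : LabelCover X Y A B} {d : ℕ}

/-- The level of a variable. -/
def lvlFn : PV X Y A B → ℕ
  | PV.e _ _ i => i
  | PV.el _ _ _ i => i
  | _ => 0

/-- The blocking set used in the cover extraction argument. -/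
def exT (I : LabelCover X Y A B) (H : Finset (PV X Y A B)) (y : Y) (i₀ : ℕ) :
    Set (PV X Y A B) := fun w =>
  match w with
  | PV.u ℓ => PV.u ℓ ∈ H
  | PV.e _ y' i => ¬(y' = y ∧ i = i₀)
  | PV.el z y' b i => ¬(y' = y ∧ i = i₀) ∨
      (PV.u (Sum.inr (y, b)) ∈ H ∧ ∃ a, PV.u (Sum.inl (z, a)) ∈ H ∧ (a, b) ∈ I.cst (z, y))
  | PV.v _ => False

variable {H : Finset (PV X Y A B)} {y : Y} {i₀ : ℕ}

lemma exT_u {ℓ : Lab X Y A B} : PV.u ℓ ∈ exT I H y i₀ ↔ PV.u ℓ ∈ H := Iff.rfl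

lemma exT_e {x : X} {y' : Y} {i : ℕ} :
    PV.e x y' i ∈ exT I H y i₀ ↔ ¬(y' = y ∧ i = i₀) := Iff.rfl

lemma exT_el {z : X} {y' : Y} {b : B} {i : ℕ} :
    PV.el z y' b i ∈ exT I H y i₀ ↔ ¬(y' = y ∧ i = i₀) ∨
      (PV.u (Sum.inr (y, b)) ∈ H ∧
        ∃ a, PV.u (Sum.inl (z, a)) ∈ H ∧ (a, b) ∈ I.cst (z, y)) := Iff.rfl

lemma exT_v {j : ℕ} : PV.v j ∉ exT I H y i₀ := fun h => h

/-- From a set `H` of variables whose `Ψ`-closure contains all `u` variables, a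
total cover of total label count at most `|H|` can be extracted. -/
lemma extract_cover (hY : ∀ y : Y, ∃ x, (x, y) ∈ I.E)
    {f : X → Finset A} {g : Y → Finset B} (hcov : I.IsTotalCover f g)
    (hdlt : Fintype.card X * Fintype.card A + Fintype.card Y * Fintype.card B < d)
    (hB : Nonempty B)
    (hHv : ∀ j, PV.v j ∉ H)
    (hall : ∀ ℓ : Lab X Y A B, PV.u ℓ ∈ fcClosure (PsiCNF I d) ↑H) :
    ∃ (f₀ : X → Finset A) (g₀ : Y → Finset B), I.IsTotalCover f₀ g₀ ∧
      (∑ x, (f₀ x).card) + Fintype.card Y ≤ H.card := by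
  haveI := hB
  by_cases hbig : d ≤ H.card
  · refine ⟨f, g, hcov, ?_⟩
    have h1 : ∑ x, (f x).card ≤ Fintype.card X * Fintype.card A := by
      calc ∑ x, (f x).card ≤ ∑ _x : X, Fintype.card A :=
            Finset.sum_le_sum fun x _ => Finset.card_le_univ _
        _ = Fintype.card X * Fintype.card A := by
            rw [Finset.sum_const, smul_eq_mul, Finset.card_univ]
    have h2 : Fintype.card Y ≤ Fintype.card Y * Fintype.card B :=
      Nat.le_mul_of_pos_right _ Fintype.card_pos
    omega
  · push_neg at hbig
    obtain ⟨i₀, hi₀Icc, hi₀⟩ : ∃ i₀ ∈ Finset.Icc 1 d, i₀ ∉ H.image lvlFn := by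
      by_contra hcon
      push_neg at hcon
      have hcard : (H.image lvlFn).card < (Finset.Icc 1 d).card :=
        lt_of_le_of_lt Finset.card_image_le
          (by rw [Nat.card_Icc, Nat.add_sub_cancel]; exact hbig)
      exact absurd (Finset.card_le_card fun i hi => hcon i hi) (not_le.mpr hcard)
    set f₀ : X → Finset A :=
      (fun x => Finset.univ.filter fun a => PV.u (Sum.inl (x, a)) ∈ H) with hf₀
    have key : ∀ y : Y, ∃ b, PV.u (Sum.inr (y, b)) ∈ H ∧
        ∀ z ∈ Nbr I y, ∃ a, PV.u (Sum.inl (z, a)) ∈ H ∧ (a, b) ∈ I.cst (z, y) := by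
      intro y
      by_cases hallu : ∀ ℓ : Lab X Y A B, PV.u ℓ ∈ H
      · obtain ⟨b, hb⟩ := hcov.1 y
        refine ⟨b, hallu _, fun z hz => ?_⟩
        obtain ⟨a, haf, hab⟩ := hcov.2 (z, y) (mem_Nbr.mp hz) b hb
        exact ⟨a, hallu _, hab⟩
      · push_neg at hallu
        obtain ⟨ℓ0, hℓ0⟩ := hallu
        by_contra hcon
        push_neg at hcon
        have hsub : fcClosure (PsiCNF I d) ↑H ⊆ exT I H y i₀ := by
          refine fcClosure_le ?_ ?_
          · intro w hw
            match w with
            | PV.u ℓ => exact hw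
            | PV.e x y' i =>
                rw [exT_e]
                rintro ⟨rfl, rfl⟩
                exact hi₀ (Finset.mem_image.mpr ⟨_, hw, rfl⟩)
            | PV.el z y' b i =>
                rw [exT_el]
                refine Or.inl ?_
                rintro ⟨rfl, rfl⟩
                exact hi₀ (Finset.mem_image.mpr ⟨_, hw, rfl⟩)
            | PV.v j => exact absurd hw (hHv j)
          · intro C hC v hp hn
            rcases mem_psi_cases hC with h | h | h | h
            · obtain ⟨x', y', a, b, i, hE, hab, hi, rfl⟩ := clA_elim h
              simp only [Finset.singleton_inj] at hp
              subst hp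
              have hu1 : PV.u (Sum.inl (x', a)) ∈ H := by
                have := hn (by simp : PV.u (Sum.inl (x', a)) ∈
                  (↑({PV.u (Sum.inl (x', a)), PV.u (Sum.inr (y', b))} :
                    Finset (PV X Y A B)) : Set (PV X Y A B)))
                exact exT_u.mp this
              have hu2 : PV.u (Sum.inr (y', b)) ∈ H := by
                have := hn (by simp : PV.u (Sum.inr (y', b)) ∈
                  (↑({PV.u (Sum.inl (x', a)), PV.u (Sum.inr (y', b))} :
                    Finset (PV X Y A B)) : Set (PV X Y A B)))
                exact exT_u.mp this
              rw [exT_el]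
              by_cases hcase : y' = y ∧ i = i₀
              · obtain ⟨rfl, rfl⟩ := hcase
                exact Or.inr ⟨hu2, a, hu1, hab⟩
              · exact Or.inl hcase
            · obtain ⟨x', y', b, i, hE, hi, rfl⟩ := clB_elim h
              simp only [Finset.singleton_inj] at hp
              subst hp
              rw [exT_e]
              rintro ⟨hy', hii⟩
              subst hy'
              subst hii
              have hbody : ∀ z ∈ Nbr I y', PV.el z y' b i ∈ exT I H y' i := by
                intro z hz
                exact hn (by
                  simp only [Finset.coe_image, Set.mem_image, Finset.mem_coe]
                  exact ⟨z, hz, rfl⟩)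
              have hx'N : x' ∈ Nbr I y' := mem_Nbr.mpr hE
              have hb' : PV.u (Sum.inr (y', b)) ∈ H := by
                rcases exT_el.mp (hbody x' hx'N) with h' | h'
                · exact absurd ⟨rfl, rfl⟩ h'
                · exact h'.1
              obtain ⟨z', hz', hbad⟩ := hcon b hb'
              rcases exT_el.mp (hbody z' hz') with h' | h'
              · exact absurd ⟨rfl, rfl⟩ h'
              · obtain ⟨-, a', ha', hab'⟩ := h'
                exact hbad a' ha' hab'
            · obtain ⟨x', y', b, i, hE, hi, rfl⟩ := clC_elim h
              simp only [Finset.singleton_inj] at hp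
              subst hp
              rw [exT_el]
              refine Or.inl ?_
              have := hn (by simp : PV.e x' y' i ∈
                (↑({PV.e x' y' i} : Finset (PV X Y A B)) : Set (PV X Y A B)))
              exact exT_e.mp this
            · obtain ⟨ℓ, rfl⟩ := clD_elim h
              obtain ⟨x₁, hx₁⟩ := hY y
              have := hn (Finset.mem_coe.mpr (mem_bigBody hx₁ hi₀Icc))
              exact absurd ⟨rfl, rfl⟩ (exT_e.mp this)
        exact hℓ0 (exT_u.mp (hsub (hall ℓ0)))
    choose bfun hb1 hb2 using key
    refine ⟨f₀, fun y => {bfun y}, ⟨fun y => ⟨bfun y, Finset.mem_singleton_self _⟩, ?_⟩, ?_⟩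
    · rintro ⟨x, y⟩ he b hbmem
      rw [Finset.mem_singleton] at hbmem
      subst hbmem
      obtain ⟨a, haH, hab⟩ := hb2 y x (mem_Nbr.mpr he)
      exact ⟨a, Finset.mem_filter.mpr ⟨Finset.mem_univ _, haH⟩, hab⟩
    · have hKsub : ((Finset.univ : Finset X).biUnion fun x =>
          (f₀ x).image fun a => PV.u (Sum.inl (x, a))) ∪
          ((Finset.univ : Finset Y).image fun y => PV.u (Sum.inr (y, bfun y))) ⊆ H := by
        apply Finset.union_subset
        · intro w hw
          obtain ⟨x, -, hx⟩ := Finset.mem_biUnion.mp hw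
          obtain ⟨a, ha, rfl⟩ := Finset.mem_image.mp hx
          exact (Finset.mem_filter.mp ha).2
        · intro w hw
          obtain ⟨y, -, rfl⟩ := Finset.mem_image.mp hw
          exact hb1 y
      have hKcard : (((Finset.univ : Finset X).biUnion fun x =>
          (f₀ x).image fun a => PV.u (Sum.inl (x, a))) ∪
          ((Finset.univ : Finset Y).image fun y => PV.u (Sum.inr (y, bfun y)))).card =
          (∑ x, (f₀ x).card) + Fintype.card Y := by
        rw [Finset.card_union_of_disjoint, Finset.card_biUnion]
        · congr 1
          · exact Finset.sum_congr rfl fun x _ =>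
              Finset.card_image_of_injective _ (fun a b h => by simpa using h)
          · rw [Finset.card_image_of_injective _ (fun a b h => by
              simp only [PV.u.injEq, Sum.inr.injEq, Prod.mk.injEq] at h
              exact h.1), Finset.card_univ]
        · intro x1 _ x2 _ hne
          rw [Function.onFun, Finset.disjoint_left]
          intro w hw hw'
          obtain ⟨a, -, rfl⟩ := Finset.mem_image.mp hw
          obtain ⟨a', -, h'⟩ := Finset.mem_image.mp hw'
          apply hne
          injection h' with h'
          injection h' with h'
          exact (Prod.ext_iff.mp h').1.symm
        · rw [Finset.disjoint_left]
          intro w hw hw'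
          obtain ⟨x, -, hx⟩ := Finset.mem_biUnion.mp hw
          obtain ⟨a, -, rfl⟩ := Finset.mem_image.mp hx
          obtain ⟨y', -, h⟩ := Finset.mem_image.mp hw'
          injection h with h
          exact nomatch h
      calc (∑ x, (f₀ x).card) + Fintype.card Y
          = _ := hKcard.symm
        _ ≤ H.card := Finset.card_le_card hKsub

end ExtractAux








/-- With `d = 1 + rλ + sλ′`, if `Υ` is a clause minimum prime pure
Horn CNF representation of the canonical function `h` and `(f, g)` is any tight
optimal total-cover of the (refined) Label Cover instance, then
`|Ψ|_c/(λ+λ′) ≤ |Υ|_c − t(κ(f)·r + s) ≤ |Ψ|_c`, where `κ(f)·r + s` is the total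
number of labels assigned by the total-cover. -/
theorem min_rep_size_bounds
    {X Y A B : Type*} [Fintype X] [Fintype Y] [Fintype A] [Fintype B]
    [DecidableEq X] [DecidableEq Y] [DecidableEq A] [DecidableEq B]
    [Nonempty X] [Nonempty Y]
    (I : LabelCover X Y A B) (d t : ℕ) (ht : 1 ≤ t)
    (hd : d = 1 + Fintype.card X * Fintype.card A + Fintype.card Y * Fintype.card B)
    (hnoIsoX : ∀ x : X, ∃ y, (x, y) ∈ I.E)
    (hnoIsoY : ∀ y : Y, ∃ x, (x, y) ∈ I.E)
    (Υ : Finset (Clause (PV X Y A B)))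
    (hPH : IsPureHornCNF Υ)
    (hprime : ∀ C ∈ Υ, PrimeImplicate (hFun I d t) C)
    (hrep : Represents Υ (hFun I d t))
    (hmin : ∀ Υ' : Finset (Clause (PV X Y A B)), IsPureHornCNF Υ' →
      Represents Υ' (hFun I d t) → Υ.card ≤ Υ'.card)
    (f : X → Finset A) (g : Y → Finset B)
    (hcov : I.IsTotalCover f g) (htight : LabelCover.Tight g)
    (hopt : ∀ (f' : X → Finset A) (g' : Y → Finset B),
      I.IsTotalCover f' g' → lcCost f ≤ lcCost f') :
    ((PsiCNF I d).card : ℚ) / ((Fintype.card A : ℚ) + (Fintype.card B : ℚ)) ≤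
      (Υ.card : ℚ) -
        (t : ℚ) * (lcCost f * (Fintype.card X : ℚ) + (Fintype.card Y : ℚ)) ∧
    (Υ.card : ℚ) -
        (t : ℚ) * (lcCost f * (Fintype.card X : ℚ) + (Fintype.card Y : ℚ)) ≤
      ((PsiCNF I d).card : ℚ) := by
  classical
  have hΦPH : IsPureHornCNF (PhiCNF I d t) := phi_pureHorn
  have hΦrep : Represents (PhiCNF I d t) (hFun I d t) := fun a => Iff.rfl
  have hΨrep : Represents (PsiCNF I d) (gFun I d) := fun a => Iff.rfl
  have hΨPH : IsPureHornCNF (PsiCNF I d) := psi_pureHorn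
  -- nonemptiness of the label sets
  obtain ⟨y0⟩ := (inferInstance : Nonempty Y)
  obtain ⟨b0, hb0⟩ := hcov.1 y0
  have hBne : Nonempty B := ⟨b0⟩
  obtain ⟨x0⟩ := (inferInstance : Nonempty X)
  obtain ⟨y1, hy1⟩ := hnoIsoX x0
  obtain ⟨b1, hb1⟩ := hcov.1 y1
  obtain ⟨a1, -, -⟩ := hcov.2 (x0, y1) hy1 b1 hb1
  have hAne : Nonempty A := ⟨a1⟩
  have hlam : 1 ≤ Fintype.card A := @Fintype.card_pos _ _ hAne
  have hlam' : 1 ≤ Fintype.card B := @Fintype.card_pos _ _ hBne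
  have hd' : Fintype.card X * Fintype.card A + Fintype.card Y * Fintype.card B < d := by
    omega
  -- (1) the upper bound, via the economical representation built from (f,g)
  have hN1 : Υ.card ≤ (PsiCNF I d).card +
      t * ((∑ x, (f x).card) + Fintype.card Y) :=
    (hmin (PhiF I d t f g) phiF_pureHorn (phiF_represents hcov)).trans
      (phiF_card htight)
  -- (2) heads of Υ are never v-variables
  have hheadnotv : ∀ C ∈ Υ, ∀ j : ℕ, C.pos ≠ {PV.v j} := by
    intro C hC j hpos
    have himp := (hprime C hC).2.1
    have hmem : PV.v j ∈ fcClosure (PhiCNF I d t) ↑C.neg :=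
      head_mem_fcClosure hΦPH hΦrep himp hpos subset_rfl
    have hmem' : PV.v j ∈ (↑C.neg : Set (PV X Y A B)) :=
      mem_of_mem_fcClosure_no_head (fun C' hC' => phi_no_v_head hC' j) hmem
    exact Finset.disjoint_left.mp (hprime C hC).1
      (hpos ▸ Finset.mem_singleton_self _) (Finset.mem_coe.mp hmem')
  -- (3) structure of Υ-clauses containing a v-variable
  have P1 : ∀ C ∈ Υ, ∀ j : ℕ, PV.v j ∈ C.neg →
      j ∈ Finset.Icc 1 t ∧ C.neg = {PV.v j} := by
    intro C hC j hj
    obtain ⟨hcl, himp, -, hmin4⟩ := hprime C hC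
    obtain ⟨w, hw⟩ := (hPH C hC).2
    have hwneg : w ∉ C.neg := fun h =>
      Finset.disjoint_left.mp hcl (hw ▸ Finset.mem_singleton_self w) h
    have hwcl : w ∈ fcClosure (PhiCNF I d t) ↑C.neg :=
      head_mem_fcClosure hΦPH hΦrep himp hw subset_rfl
    have hjt : j ∈ Finset.Icc 1 t := by
      by_contra hjt
      have hsets : (↑C.neg : Set (PV X Y A B)) =
          insert (PV.v j) ↑(C.neg.erase (PV.v j)) := by
        rw [Finset.coe_erase, Set.insert_diff_singleton,
          Set.insert_eq_of_mem (Finset.mem_coe.mpr hj)]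
      have hins : fcClosure (PhiCNF I d t) ↑C.neg ⊆
          insert (PV.v j) (fcClosure (PhiCNF I d t) ↑(C.neg.erase (PV.v j))) := by
        rw [hsets]
        exact fcClosure_insert fun C' hC' v' hp' hw' =>
          absurd hw' (phi_no_v_out hC' hjt)
      have hw' : w ∈ fcClosure (PhiCNF I d t) ↑(C.neg.erase (PV.v j)) := by
        rcases Set.mem_insert_iff.mp (hins hwcl) with h | h
        · exact absurd (h ▸ hw) (hheadnotv C hC j)
        · exact h
      have himp' : Implicate (hFun I d t) ⟨C.pos, C.neg.erase (PV.v j)⟩ := by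
        rw [hw]
        exact implicate_of_head hΦrep hw'
      exact hmin4 (PV.v j) hj himp'
    refine ⟨hjt, ?_⟩
    have huniq : ∀ w' ∈ C.neg, w' = PV.v j := by
      intro w' hw'
      by_contra hne
      have hvj_mem : PV.v j ∈ C.neg.erase w' :=
        Finset.mem_erase.mpr ⟨fun h => hne h.symm, hj⟩
      have hvalidsub : ∀ u ∈ validVars I d,
          u ∈ fcClosure (PhiCNF I d t) ↑(C.neg.erase w') := by
        intro u hu
        refine fcClosure_mono ?_ (valid_subset_closure_vj hcov hjt u hu)
        intro q hq
        rw [Set.mem_singleton_iff.mp hq]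
        exact Finset.mem_coe.mpr hvj_mem
      have hsets : (↑C.neg : Set (PV X Y A B)) = insert w' ↑(C.neg.erase w') := by
        rw [Finset.coe_erase, Set.insert_diff_singleton,
          Set.insert_eq_of_mem (Finset.mem_coe.mpr hw')]
      have hins : fcClosure (PhiCNF I d t) ↑C.neg ⊆
          insert w' (fcClosure (PhiCNF I d t) ↑(C.neg.erase w')) := by
        rw [hsets]
        refine fcClosure_insert ?_
        intro C' hC' v' hp' hw''
        obtain ⟨-, w'', hp'', hvalid⟩ := phi_shape hC'
        rw [hp'] at hp''
        rw [Finset.singleton_inj.mp hp'']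
        exact hvalidsub _ hvalid
      have hwmem : w ∈ fcClosure (PhiCNF I d t) ↑(C.neg.erase w') := by
        rcases Set.mem_insert_iff.mp (hins hwcl) with h | h
        · exact absurd (h ▸ hw') hwneg
        · exact h
      have himp' : Implicate (hFun I d t) ⟨C.pos, C.neg.erase w'⟩ := by
        rw [hw]
        exact implicate_of_head hΦrep hwmem
      exact hmin4 w' hw' himp'
    exact Finset.eq_singleton_iff_unique_mem.mpr ⟨hj, huniq⟩
  -- (4) decomposition of Υ
  set Υ0 : Finset (Clause (PV X Y A B)) :=
    Υ.filter (fun C => ∀ j : ℕ, PV.v j ∉ C.neg) with hΥ0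
  set ΥJ : ℕ → Finset (Clause (PV X Y A B)) :=
    fun j => Υ.filter (fun C => PV.v j ∈ C.neg) with hΥJ
  have hdecomp : Υ0.card + ∑ j ∈ Finset.Icc 1 t, (ΥJ j).card ≤ Υ.card := by
    have hsub : Υ0 ∪ (Finset.Icc 1 t).biUnion ΥJ ⊆ Υ := by
      apply Finset.union_subset (Finset.filter_subset _ _)
      exact Finset.biUnion_subset.mpr fun j _ => Finset.filter_subset _ _
    have hdisj1 : Disjoint Υ0 ((Finset.Icc 1 t).biUnion ΥJ) := by
      rw [Finset.disjoint_left]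
      intro C hC hC'
      obtain ⟨j, -, hCj⟩ := Finset.mem_biUnion.mp hC'
      exact (Finset.mem_filter.mp hC).2 j (Finset.mem_filter.mp hCj).2
    have hcards : ((Finset.Icc 1 t).biUnion ΥJ).card =
        ∑ j ∈ Finset.Icc 1 t, (ΥJ j).card := by
      refine Finset.card_biUnion ?_
      intro j1 _ j2 _ hne
      rw [Function.onFun, Finset.disjoint_left]
      intro C hC1 hC2
      have h1 := (P1 C (Finset.filter_subset _ _ hC1) j1
        (Finset.mem_filter.mp hC1).2).2
      have h2 := (Finset.mem_filter.mp hC2).2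
      rw [h1, Finset.mem_singleton] at h2
      exact hne (by injection h2 with h2; exact h2.symm)
    calc Υ0.card + ∑ j ∈ Finset.Icc 1 t, (ΥJ j).card
        = (Υ0 ∪ (Finset.Icc 1 t).biUnion ΥJ).card := by
          rw [Finset.card_union_of_disjoint hdisj1, hcards]
      _ ≤ Υ.card := Finset.card_le_card hsub
  -- (5) each ΥJ j is large
  have hJ : ∀ j ∈ Finset.Icc 1 t,
      (∑ x, (f x).card) + Fintype.card Y ≤ (ΥJ j).card := by
    intro j hjt
    set Hj : Finset (PV X Y A B) := (ΥJ j).biUnion (fun C => C.pos) with hHjdef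
    have hHjcard : Hj.card ≤ (ΥJ j).card := by
      refine Finset.card_biUnion_le.trans (le_of_eq ?_)
      rw [Finset.card_eq_sum_ones (ΥJ j)]
      refine Finset.sum_congr rfl fun C hC => ?_
      obtain ⟨w, hw⟩ := (hPH C (Finset.filter_subset _ _ hC)).2
      rw [hw, Finset.card_singleton]
    have hHjv : ∀ j' : ℕ, PV.v j' ∉ Hj := by
      intro j' hmem
      obtain ⟨C, hC, hpos⟩ := Finset.mem_biUnion.mp hmem
      obtain ⟨w, hw⟩ := (hPH C (Finset.filter_subset _ _ hC)).2
      rw [hw, Finset.mem_singleton] at hpos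
      exact hheadnotv C (Finset.filter_subset _ _ hC) j' (by rw [hw, hpos])
    have hallu : ∀ ℓ : Lab X Y A B, PV.u ℓ ∈ fcClosure (PsiCNF I d) ↑Hj := by
      have hstep1 : ∀ ℓ : Lab X Y A B,
          PV.u ℓ ∈ fcClosure (PhiCNF I d t) {PV.v j} := fun ℓ =>
        valid_subset_closure_vj hcov hjt _ (Finset.mem_union.mpr
          (Or.inl (Finset.mem_union.mpr (Or.inl (mem_allU ℓ)))))
      have hstep2 : fcClosure (PhiCNF I d t) {PV.v j} ⊆ fcClosure Υ {PV.v j} :=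
        fcClosure_le_fcClosure hPH hrep fun C hC => implicate_of_rep hΦrep hC
      have hstep3 : fcClosure Υ {PV.v j} ⊆
          {PV.v j} ∪ fcClosure (PsiCNF I d) ↑Hj := by
        refine fcClosure_le (fun q hq => Or.inl hq) ?_
        intro C hC v hp hn
        by_cases hvj : PV.v j ∈ C.neg
        · refine Or.inr (le_fcClosure ?_)
          exact Finset.mem_coe.mpr (Finset.mem_biUnion.mpr
            ⟨C, Finset.mem_filter.mpr ⟨hC, hvj⟩, hp ▸ Finset.mem_singleton_self v⟩)
        · by_cases hvfree : ∀ j' : ℕ, PV.v j' ∉ C.neg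
          · have hfree : ∀ j' : ℕ, PV.v j' ∉ C.pos ∧ PV.v j' ∉ C.neg := by
              intro j'
              refine ⟨?_, hvfree j'⟩
              intro hmem
              obtain ⟨w, hw⟩ := (hPH C hC).2
              rw [hw, Finset.mem_singleton] at hmem
              exact hheadnotv C hC j' (by rw [hw, hmem])
            have himpg : Implicate (gFun I d) C :=
              implicate_g_of_h hfree (implicate_of_rep hrep hC)
            have hnsub : ↑C.neg ⊆ fcClosure (PsiCNF I d) ↑Hj := by
              intro q hq
              rcases hn hq with h | h
              · rw [Set.mem_singleton_iff.mp h] at hq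
                exact absurd (Finset.mem_coe.mp hq) hvj
              · exact h
            exact Or.inr (fcClosure_idem
              (head_mem_fcClosure hΨPH hΨrep himpg hp hnsub))
          · push_neg at hvfree
            obtain ⟨j', hj'⟩ := hvfree
            have hnegeq := (P1 C hC j' hj').2
            have hmem : PV.v j' ∈ ({PV.v j} : Set (PV X Y A B)) ∪
                fcClosure (PsiCNF I d) ↑Hj :=
              hn (Finset.mem_coe.mpr (by rw [hnegeq]; exact Finset.mem_singleton_self _))
            rcases hmem with h | h
            · have : j' = j := by
                have := Set.mem_singleton_iff.mp h
                injection this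
              exact absurd (this ▸ hj') hvj
            · have hmem2 := mem_of_mem_fcClosure_no_head (Γ := PsiCNF I d)
                (fun C' hC' hcontra => by
                  obtain ⟨-, w'', hp'', hvalid⟩ := phi_shape
                    (psi_subset_phi (t := t) hC')
                  rw [hp''] at hcontra
                  rw [Finset.singleton_inj.mp hcontra] at hvalid
                  exact v_not_mem_validVars j' hvalid) h
              exact absurd (Finset.mem_coe.mp hmem2) (hHjv j')
      intro ℓ
      rcases hstep3 (hstep2 (hstep1 ℓ)) with h | h
      · exact absurd (Set.mem_singleton_iff.mp h) (by simp)
      · exact h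
    obtain ⟨f₀, g₀, hcov₀, hcnt⟩ :=
      extract_cover hnoIsoY hcov hd' hBne hHjv hallu
    have hopt' := hopt f₀ g₀ hcov₀
    have hFle : (∑ x, (f x).card) ≤ ∑ x, (f₀ x).card := by
      have hr0 : (0 : ℚ) < (Fintype.card X : ℚ) := by
        exact_mod_cast Fintype.card_pos
      rw [lcCost, lcCost, div_le_div_iff_of_pos_right hr0] at hopt'
      have : ((∑ x, (f x).card : ℕ) : ℚ) ≤ ((∑ x, (f₀ x).card : ℕ) : ℚ) := by
        push_cast
        exact hopt'
      exact_mod_cast this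
    omega
  -- (6) Υ0 is large
  have hclosU : ∀ Q : Set (PV X Y A B), (∀ j : ℕ, PV.v j ∉ Q) →
      fcClosure Υ Q ⊆ fcClosure Υ0 Q := by
    intro Q hQ
    refine fcClosure_le le_fcClosure ?_
    intro C hC v hp hn
    by_cases hvfree : ∀ j' : ℕ, PV.v j' ∉ C.neg
    · exact fcClosure_closed (Finset.mem_filter.mpr ⟨hC, hvfree⟩) hp hn
    · push_neg at hvfree
      obtain ⟨j', hj'⟩ := hvfree
      have hnegeq := (P1 C hC j' hj').2
      have hvj' : PV.v j' ∈ fcClosure Υ0 Q :=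
        hn (Finset.mem_coe.mpr (by rw [hnegeq]; exact Finset.mem_singleton_self _))
      have := mem_of_mem_fcClosure_no_head
        (fun C' hC' => hheadnotv C' (Finset.filter_subset _ _ hC') j') hvj'
      exact absurd this (hQ j')
  have hex : ∀ w ∈ validVars I d, ∃ C ∈ Υ0, C.pos = {w} := by
    intro w hw
    obtain ⟨Q, hQv, hQw, hwmem⟩ : ∃ Q : Finset (PV X Y A B),
        (∀ j : ℕ, PV.v j ∉ Q) ∧ w ∉ Q ∧ w ∈ fcClosure (PhiCNF I d t) ↑Q := by
      rcases Finset.mem_union.mp hw with hw' | hw'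
      · rcases Finset.mem_union.mp hw' with hw'' | hw''
        · obtain ⟨ℓ, -, rfl⟩ := Finset.mem_image.mp hw''
          refine ⟨bigBody I d, ?_, ?_, ?_⟩
          · intro j hj
            obtain ⟨x, y, i, -, -, h⟩ := mem_bigBody_elim hj
            exact nomatch h
          · intro h
            obtain ⟨x, y, i, -, -, h'⟩ := mem_bigBody_elim h
            exact nomatch h'
          · exact fcClosure_closed (psi_subset_phi (clD_subset (mem_clD ℓ))) rfl
              le_fcClosure
        · obtain ⟨⟨⟨x, y⟩, i⟩, hp, rfl⟩ := Finset.mem_image.mp hw''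
          obtain ⟨hE, hi⟩ := Finset.mem_product.mp hp
          obtain ⟨b⟩ := hBne
          refine ⟨(Nbr I y).image fun z => PV.el z y b i, ?_, ?_, ?_⟩
          · intro j hj
            obtain ⟨z, -, h⟩ := Finset.mem_image.mp hj
            exact nomatch h
          · intro h
            obtain ⟨z, -, h'⟩ := Finset.mem_image.mp h
            exact nomatch h'
          · exact fcClosure_closed (psi_subset_phi (clB_subset (mem_clB b hE hi))) rfl
              le_fcClosure
      · obtain ⟨⟨⟨⟨x, y⟩, b⟩, i⟩, hp, rfl⟩ := Finset.mem_image.mp hw'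
        obtain ⟨hp1, hi⟩ := Finset.mem_product.mp hp
        refine ⟨{PV.e x y i}, ?_, by simp, ?_⟩
        · intro j hj
          rw [Finset.mem_singleton] at hj
          exact nomatch hj
        · exact fcClosure_closed (psi_subset_phi (clC_subset
            (mem_clC b (Finset.mem_product.mp hp1).1 hi))) rfl le_fcClosure
    have h1 : fcClosure (PhiCNF I d t) ↑Q ⊆ fcClosure Υ ↑Q :=
      fcClosure_le_fcClosure hPH hrep fun C hC => implicate_of_rep hΦrep hC
    have hwcl : w ∈ fcClosure Υ0 ↑Q :=
      hclosU ↑Q (fun j hj => hQv j (Finset.mem_coe.mp hj)) (h1 hwmem)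
    by_contra hcon
    push_neg at hcon
    have := mem_of_mem_fcClosure_no_head (fun C' hC' => hcon C' hC') hwcl
    exact hQw (Finset.mem_coe.mp this)
  have hU0 : (validVars I d).card ≤ Υ0.card := by
    have hex' : ∀ w : PV X Y A B, ∃ C : Clause (PV X Y A B),
        w ∈ validVars I d → C ∈ Υ0 ∧ C.pos = {w} := by
      intro w
      by_cases h : w ∈ validVars I d
      · obtain ⟨C, hC1, hC2⟩ := hex w h
        exact ⟨C, fun _ => ⟨hC1, hC2⟩⟩
      · exact ⟨⟨∅, ∅⟩, fun h' => absurd h' h⟩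
    choose Fc hFc using hex'
    refine Finset.card_le_card_of_injOn Fc (fun w hw => (hFc w hw).1) ?_
    intro w hw w' hw' heq
    have h1 := (hFc w hw).2
    have h2 := (hFc w' hw').2
    rw [heq, h2] at h1
    exact (Finset.singleton_inj.mp h1).symm
  -- (7) combine the counts
  have hJsum : t * ((∑ x, (f x).card) + Fintype.card Y) ≤
      ∑ j ∈ Finset.Icc 1 t, (ΥJ j).card := by
    calc t * ((∑ x, (f x).card) + Fintype.card Y)
        = ∑ _j ∈ Finset.Icc 1 t, ((∑ x, (f x).card) + Fintype.card Y) := by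
          rw [Finset.sum_const, smul_eq_mul, Nat.card_Icc, Nat.add_sub_cancel]
      _ ≤ ∑ j ∈ Finset.Icc 1 t, (ΥJ j).card := Finset.sum_le_sum hJ
  have hN3 : (validVars I d).card + t * ((∑ x, (f x).card) + Fintype.card Y) ≤
      Υ.card := by omega
  -- (8) |Ψ| ≤ (λ + λ′) |validVars|
  have hN2 : (PsiCNF I d).card ≤
      (Fintype.card A + Fintype.card B) * (validVars I d).card := by
    refine psi_card_le.trans ?_
    rw [card_validVars]
    have h1 : 1 * (Fintype.card X * Fintype.card A + Fintype.card Y * Fintype.card B)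
        ≤ (Fintype.card A + Fintype.card B) *
          (Fintype.card X * Fintype.card A + Fintype.card Y * Fintype.card B) :=
      Nat.mul_le_mul_right _ (by omega)
    have h2 : Fintype.card B * (I.E.card * d) ≤
        (Fintype.card A + Fintype.card B) * (I.E.card * d) :=
      Nat.mul_le_mul_right _ (by omega)
    have h3 : (Fintype.card A + 1) * (I.E.card * Fintype.card B * d) ≤
        (Fintype.card A + Fintype.card B) * (I.E.card * Fintype.card B * d) :=
      Nat.mul_le_mul_right _ (by omega)
    calc I.E.card * d * (Fintype.card A * Fintype.card B) +
          I.E.card * Fintype.card B * d + I.E.card * Fintype.card B * d +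
          (Fintype.card X * Fintype.card A + Fintype.card Y * Fintype.card B)
        = (Fintype.card A + 1) * (I.E.card * Fintype.card B * d) +
          Fintype.card B * (I.E.card * d) +
          1 * (Fintype.card X * Fintype.card A +
            Fintype.card Y * Fintype.card B) := by ring
      _ ≤ (Fintype.card A + Fintype.card B) * (I.E.card * Fintype.card B * d) +
          (Fintype.card A + Fintype.card B) * (I.E.card * d) +
          (Fintype.card A + Fintype.card B) *
            (Fintype.card X * Fintype.card A + Fintype.card Y * Fintype.card B) := by
          exact Nat.add_le_add (Nat.add_le_add h3 h2) h1
      _ = (Fintype.card A + Fintype.card B) *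
          ((Fintype.card X * Fintype.card A + Fintype.card Y * Fintype.card B) +
            I.E.card * d + I.E.card * Fintype.card B * d) := by ring
  -- (9) final rational arithmetic
  have hr0 : (0 : ℚ) < (Fintype.card X : ℚ) := by exact_mod_cast Fintype.card_pos
  have hcost : lcCost f * (Fintype.card X : ℚ) = ((∑ x, (f x).card : ℕ) : ℚ) := by
    rw [lcCost, div_mul_cancel₀ _ (ne_of_gt hr0)]
    push_cast
    rfl
  have hK : lcCost f * (Fintype.card X : ℚ) + (Fintype.card Y : ℚ) =
      (((∑ x, (f x).card) + Fintype.card Y : ℕ) : ℚ) := by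
    rw [hcost]
    push_cast
    ring
  have hL0 : (0 : ℚ) < (Fintype.card A : ℚ) + (Fintype.card B : ℚ) := by
    have : (1 : ℚ) ≤ (Fintype.card A : ℚ) := by exact_mod_cast hlam
    have : (0 : ℚ) ≤ (Fintype.card B : ℚ) := by positivity
    linarith
  have hN1Q : (Υ.card : ℚ) ≤ ((PsiCNF I d).card : ℚ) +
      (t : ℚ) * (((∑ x, (f x).card) + Fintype.card Y : ℕ) : ℚ) := by
    exact_mod_cast hN1
  have hN3Q : ((validVars I d).card : ℚ) +
      (t : ℚ) * (((∑ x, (f x).card) + Fintype.card Y : ℕ) : ℚ) ≤ (Υ.card : ℚ) := by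
    exact_mod_cast hN3
  have hN2Q : ((PsiCNF I d).card : ℚ) ≤
      ((Fintype.card A : ℚ) + (Fintype.card B : ℚ)) * ((validVars I d).card : ℚ) := by
    exact_mod_cast hN2
  constructor
  · rw [hK, div_le_iff₀ hL0]
    have hVle : ((validVars I d).card : ℚ) ≤
        (Υ.card : ℚ) - (t : ℚ) * (((∑ x, (f x).card) + Fintype.card Y : ℕ) : ℚ) := by
      linarith
    calc ((PsiCNF I d).card : ℚ)
        ≤ ((Fintype.card A : ℚ) + (Fintype.card B : ℚ)) *
          ((validVars I d).card : ℚ) := hN2Q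
      _ ≤ ((Fintype.card A : ℚ) + (Fintype.card B : ℚ)) *
          ((Υ.card : ℚ) - (t : ℚ) *
            (((∑ x, (f x).card) + Fintype.card Y : ℕ) : ℚ)) :=
          mul_le_mul_of_nonneg_left hVle (le_of_lt hL0)
      _ = ((Υ.card : ℚ) - (t : ℚ) *
            (((∑ x, (f x).card) + Fintype.card Y : ℕ) : ℚ)) *
          ((Fintype.card A : ℚ) + (Fintype.card B : ℚ)) := by ring
  · rw [hK]
    linarith
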